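/- Let V = ℂ^k with standard basis e_1, …, e_k, and for each i ≥ 0 let d_i : B ⊗ Λ^i V → B ⊗ Λ^{i+1} V be the ℂ-linear map determined by d_i(b ⊗ ω) = Σ_{s=1}^k ∂_s(b) ⊗ (e_s ∧ ω). Then: d_{i+1} ∘ d_i = 0 for all i ≥ 0; the kernel of d_0 equals G^0 ⊗ Λ^0 V (so the degree-0 cohomology is isomorphic to G^0 = ⋂_{s=1}^k ker ∂_s); and for every i ≥ 1 the kernel of d_i equals the image of d_{i−1}. In other words, the cohomology of the complex (B ⊗ Λ^•V, d) is concentrated in degree 0, where it is isomorphic to G^0. -/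

import Mathlib

open TensorProduct
open scoped Classical
set_option maxHeartbeats 1000000
set_option synthInstance.maxHeartbeats 400000

/-- Left wedge multiplication by a vector, `x ∧ ω`, as a map `⋀^i V → ⋀^{i+1} V`. -/
noncomputable def wedgeCons {k : ℕ} (i : ℕ) (x : Fin k → ℂ)
    (ω : ⋀[ℂ]^i (Fin k → ℂ)) : ⋀[ℂ]^(i + 1) (Fin k → ℂ) :=
  ⟨ExteriorAlgebra.ι ℂ x * (ω : ExteriorAlgebra ℂ (Fin k → ℂ)), by
    have h : (⋀[ℂ]^(i + 1) (Fin k → ℂ)) =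
        LinearMap.range (ExteriorAlgebra.ι ℂ :
          (Fin k → ℂ) →ₗ[ℂ] ExteriorAlgebra ℂ (Fin k → ℂ)) * ⋀[ℂ]^i (Fin k → ℂ) :=
      pow_succ' _ _
    rw [h]
    exact Submodule.mul_mem_mul (LinearMap.mem_range_self _ x) ω.2⟩


section Bside

variable {B : Type} [Ring B] [Algebra ℂ B]
variable {n k : ℕ} (hk : k ≤ n) (Bgen : Fin n → B) (der : Fin k → (B →ₗ[ℂ] B))

/-- the distinguished elements `x_s`. -/
def xel (s : Fin k) : B := Bgen (Fin.castLE hk s)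

theorem der_one (hleib : ∀ (s : Fin k) (x y : B), der s (x * y) = der s x * y + x * der s y)
    (s : Fin k) : der s 1 = 0 := by
  have := hleib s 1 1
  simp only [mul_one, one_mul] at this
  exact left_eq_add.mp this

theorem der_pow_comm (hcomm : ∀ (s t : Fin k) (x : B), der s (der t x) = der t (der s x))
    (s t : Fin k) (m : ℕ) (b : B) :
    der t ((der s ^ m) b) = (der s ^ m) (der t b) := by
  induction m generalizing b with
  | zero => simp
  | succ m ih =>
    rw [pow_succ, Module.End.mul_apply, Module.End.mul_apply, ih, hcomm]

theorem pow_zero_mono {m m' : ℕ} (h : m ≤ m') {b : B} (s : Fin k)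
    (hb : (der s ^ m) b = 0) : (der s ^ m') b = 0 := by
  obtain ⟨r, rfl⟩ := Nat.exists_eq_add_of_le h
  rw [add_comm, pow_add, Module.End.mul_apply, hb, map_zero]

/-- local nilpotency of each derivation -/
theorem der_nil (hgen : Algebra.adjoin ℂ (Set.range Bgen) = ⊤)
    (hleib : ∀ (s : Fin k) (x y : B), der s (x * y) = der s x * y + x * der s y)
    (hval : ∀ (s : Fin k) (j : Fin n),
      der s (Bgen j) = if (s : ℕ) = (j : ℕ) then 1 else 0)
    (s : Fin k) (b : B) : ∃ m, (der s ^ m) b = 0 := by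
  have key : ∀ N a c (x y : B), (der s ^ a) x = 0 → (der s ^ c) y = 0 → a + c ≤ N →
      ∃ m, (der s ^ m) (x * y) = 0 := by
    intro N
    induction N with
    | zero =>
      intro a c x y hx hy habc
      obtain ⟨rfl, rfl⟩ : a = 0 ∧ c = 0 := by omega
      rw [pow_zero, Module.End.one_apply] at hx
      exact ⟨0, by rw [pow_zero, Module.End.one_apply, hx, zero_mul]⟩
    | succ N ih =>
      intro a c x y hx hy habc
      rcases Nat.eq_zero_or_pos a with rfl | ha
      · rw [pow_zero, Module.End.one_apply] at hx
        exact ⟨0, by rw [pow_zero, Module.End.one_apply, hx, zero_mul]⟩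
      rcases Nat.eq_zero_or_pos c with rfl | hc
      · rw [pow_zero, Module.End.one_apply] at hy
        exact ⟨0, by rw [pow_zero, Module.End.one_apply, hy, mul_zero]⟩
      obtain ⟨a', rfl⟩ : ∃ a', a = a' + 1 := ⟨a - 1, by omega⟩
      obtain ⟨c', rfl⟩ : ∃ c', c = c' + 1 := ⟨c - 1, by omega⟩
      have hx' : (der s ^ a') (der s x) = 0 := by
        rw [← Module.End.mul_apply, ← pow_succ]; exact hx
      have hy' : (der s ^ c') (der s y) = 0 := by
        rw [← Module.End.mul_apply, ← pow_succ]; exact hy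
      obtain ⟨m1, hm1⟩ := ih a' (c' + 1) (der s x) y hx' hy (by omega)
      obtain ⟨m2, hm2⟩ := ih (a' + 1) c' x (der s y) hx hy' (by omega)
      refine ⟨max m1 m2 + 1, ?_⟩
      rw [pow_succ, Module.End.mul_apply, hleib, map_add]
      rw [pow_zero_mono der (le_max_left m1 m2) s hm1,
        pow_zero_mono der (le_max_right m1 m2) s hm2, add_zero]
  have hb : b ∈ Algebra.adjoin ℂ (Set.range Bgen) := by rw [hgen]; trivial
  induction hb using Algebra.adjoin_induction with
  | mem x hx =>
    obtain ⟨j, rfl⟩ := hx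
    refine ⟨2, ?_⟩
    have : (der s ^ 2) (Bgen j) = der s (der s (Bgen j)) := by
      rw [pow_succ, pow_one, Module.End.mul_apply]
    rw [this, hval]
    split
    · exact der_one der hleib s
    · exact map_zero _
  | algebraMap r =>
    refine ⟨1, ?_⟩
    rw [pow_one, Algebra.algebraMap_eq_smul_one, map_smul, der_one der hleib s, smul_zero]
  | add x y hx hy ihx ihy =>
    obtain ⟨m1, hm1⟩ := ihx
    obtain ⟨m2, hm2⟩ := ihy
    exact ⟨max m1 m2, by
      rw [map_add, pow_zero_mono der (le_max_left m1 m2) s hm1,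
        pow_zero_mono der (le_max_right m1 m2) s hm2, add_zero]⟩
  | mul x y hx hy ihx ihy =>
    obtain ⟨m1, hm1⟩ := ihx
    obtain ⟨m2, hm2⟩ := ihy
    exact key (m1 + m2) m1 m2 x y hm1 hm2 le_rfl


/-- partial sum for the integration operator -/
noncomputable def Jsum (s : Fin k) (b : B) (m : ℕ) : B :=
  ∑ j ∈ Finset.range m,
    ((-1 : ℂ) ^ j / ((j + 1).factorial : ℂ)) • (xel hk Bgen s ^ (j + 1) * (der s ^ j) b)

/-- the integration operator -/
noncomputable def Jfun (s : Fin k) (b : B) : B :=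
  if h : ∃ m, (der s ^ m) b = 0 then Jsum hk Bgen der s b h.choose else 0

theorem Jsum_stable (s : Fin k) (b : B) {m m' : ℕ} (h : m ≤ m')
    (hb : (der s ^ m) b = 0) : Jsum hk Bgen der s b m' = Jsum hk Bgen der s b m := by
  unfold Jsum
  rw [← Finset.sum_range_add_sum_Ico _ h]
  have h0 : ∑ j ∈ Finset.Ico m m', ((-1 : ℂ) ^ j / ((j + 1).factorial : ℂ)) •
      (xel hk Bgen s ^ (j + 1) * (der s ^ j) b) = 0 := by
    apply Finset.sum_eq_zero
    intro j hj
    rw [pow_zero_mono der (Finset.mem_Ico.mp hj).1 s hb, mul_zero, smul_zero]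
  rw [h0, add_zero]

theorem Jfun_eq (s : Fin k) (b : B) {m : ℕ} (hb : (der s ^ m) b = 0) :
    Jfun hk Bgen der s b = Jsum hk Bgen der s b m := by
  have hex : ∃ m, (der s ^ m) b = 0 := ⟨m, hb⟩
  rw [Jfun, dif_pos hex]
  rcases le_total hex.choose m with h | h
  · exact (Jsum_stable hk Bgen der s b h hex.choose_spec).symm
  · exact Jsum_stable hk Bgen der s b h hb

theorem Jfun_add (s : Fin k) (b c : B)
    (hb : ∃ m, (der s ^ m) b = 0) (hc : ∃ m, (der s ^ m) c = 0) :
    Jfun hk Bgen der s (b + c) = Jfun hk Bgen der s b + Jfun hk Bgen der s c := by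
  obtain ⟨m1, h1⟩ := hb
  obtain ⟨m2, h2⟩ := hc
  have h1' := pow_zero_mono der (le_max_left m1 m2) s h1
  have h2' := pow_zero_mono der (le_max_right m1 m2) s h2
  have h3 : (der s ^ (max m1 m2)) (b + c) = 0 := by rw [map_add, h1', h2', add_zero]
  rw [Jfun_eq hk Bgen der s _ h3, Jfun_eq hk Bgen der s _ h1', Jfun_eq hk Bgen der s _ h2',
    Jsum, Jsum, Jsum, ← Finset.sum_add_distrib]
  apply Finset.sum_congr rfl
  intro j _
  rw [map_add, mul_add, smul_add]

theorem Jfun_smul (s : Fin k) (c : ℂ) (b : B) :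
    Jfun hk Bgen der s (c • b) = c • Jfun hk Bgen der s b := by
  by_cases hb : ∃ m, (der s ^ m) b = 0
  · obtain ⟨m, hm⟩ := hb
    have hcb : (der s ^ m) (c • b) = 0 := by rw [map_smul, hm, smul_zero]
    rw [Jfun_eq hk Bgen der s _ hcb, Jfun_eq hk Bgen der s _ hm, Jsum, Jsum,
      Finset.smul_sum]
    apply Finset.sum_congr rfl
    intro j _
    rw [map_smul, smul_comm c, mul_smul_comm]
  · by_cases hc : c = 0
    · subst hc
      rw [zero_smul, zero_smul]
      rw [Jfun_eq hk Bgen der s (0 : B) (m := 0) (by rw [pow_zero, Module.End.one_apply])]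
      simp [Jsum]
    · have hcb : ¬ ∃ m, (der s ^ m) (c • b) = 0 := by
        rintro ⟨m, hm⟩
        exact hb ⟨m, by
          have : (der s ^ m) b = c⁻¹ • (der s ^ m) (c • b) := by
            rw [map_smul, smul_smul, inv_mul_cancel₀ hc, one_smul]
          rw [this, hm, smul_zero]⟩
      rw [Jfun, dif_neg hcb, Jfun, dif_neg hb, smul_zero]

theorem der_xel (hval : ∀ (s : Fin k) (j : Fin n),
      der s (Bgen j) = if (s : ℕ) = (j : ℕ) then 1 else 0)
    (t s : Fin k) : der t (xel hk Bgen s) = if t = s then 1 else 0 := by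
  rw [xel, hval]
  simp [Fin.ext_iff]

theorem der_xel_pow_self
    (hleib : ∀ (s : Fin k) (x y : B), der s (x * y) = der s x * y + x * der s y)
    (hval : ∀ (s : Fin k) (j : Fin n),
      der s (Bgen j) = if (s : ℕ) = (j : ℕ) then 1 else 0)
    (s : Fin k) (m : ℕ) :
    der s (xel hk Bgen s ^ (m + 1)) = ((m : ℂ) + 1) • xel hk Bgen s ^ m := by
  induction m with
  | zero =>
    rw [pow_one, der_xel hk Bgen der hval, if_pos rfl]
    simp
  | succ m ih =>
    rw [pow_succ', hleib, ih, der_xel hk Bgen der hval, if_pos rfl, one_mul,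
      mul_smul_comm, ← pow_succ']
    push_cast
    module

theorem der_xel_pow_ne
    (hleib : ∀ (s : Fin k) (x y : B), der s (x * y) = der s x * y + x * der s y)
    (hval : ∀ (s : Fin k) (j : Fin n),
      der s (Bgen j) = if (s : ℕ) = (j : ℕ) then 1 else 0)
    {t s : Fin k} (hts : t ≠ s) (m : ℕ) :
    der t (xel hk Bgen s ^ m) = 0 := by
  induction m with
  | zero => rw [pow_zero]; exact der_one der hleib t
  | succ m ih =>
    rw [pow_succ', hleib, ih, der_xel hk Bgen der hval, if_neg hts, zero_mul, mul_zero,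
      add_zero]

variable (hnil : ∀ (s : Fin k) (b : B), ∃ m, (der s ^ m) b = 0)

/-- the integration operator, bundled -/
noncomputable def JL (s : Fin k) : B →ₗ[ℂ] B where
  toFun := Jfun hk Bgen der s
  map_add' := fun b c => Jfun_add hk Bgen der s b c (hnil s b) (hnil s c)
  map_smul' := fun c b => Jfun_smul hk Bgen der s c b

theorem coef_succ (j : ℕ) :
    ((-1 : ℂ) ^ j / ((j + 1).factorial : ℂ)) * ((j : ℂ) + 1) =
      (-1 : ℂ) ^ j / ((j).factorial : ℂ) := by
  have h1 : ((j.factorial : ℂ)) ≠ 0 := Nat.cast_ne_zero.mpr (Nat.factorial_ne_zero j)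
  have h2 : ((j : ℂ) + 1) ≠ 0 := by
    have := Nat.cast_add_one_ne_zero (R := ℂ) j
    exact_mod_cast this
  rw [Nat.factorial_succ]
  push_cast
  field_simp

theorem der_J_self
    (hleib : ∀ (s : Fin k) (x y : B), der s (x * y) = der s x * y + x * der s y)
    (hval : ∀ (s : Fin k) (j : Fin n),
      der s (Bgen j) = if (s : ℕ) = (j : ℕ) then 1 else 0)
    (s : Fin k) (b : B) :
    der s (JL hk Bgen der hnil s b) = b := by
  obtain ⟨m, hm⟩ := hnil s b
  have hJ : JL hk Bgen der hnil s b = Jsum hk Bgen der s b m := Jfun_eq hk Bgen der s b hm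
  rw [hJ, Jsum, map_sum]
  set g : ℕ → B := fun j => ((-1 : ℂ) ^ j / ((j).factorial : ℂ)) • (xel hk Bgen s ^ j * (der s ^ j) b) with hg
  have hterm : ∀ j, der s (((-1 : ℂ) ^ j / ((j + 1).factorial : ℂ)) •
      (xel hk Bgen s ^ (j + 1) * (der s ^ j) b)) = g j - g (j + 1) := by
    intro j
    rw [map_smul, hleib, der_xel_pow_self hk Bgen der hleib hval]
    have hD : der s ((der s ^ j) b) = (der s ^ (j + 1)) b := by
      rw [pow_succ', Module.End.mul_apply]
    rw [hD, hg]
    simp only [smul_add, smul_mul_assoc, smul_smul, coef_succ]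
    have hneg : ((-1 : ℂ) ^ (j + 1) / ((j + 1).factorial : ℂ)) = -((-1 : ℂ) ^ j / ((j + 1).factorial : ℂ)) := by
      rw [pow_succ]; ring
    rw [hneg, neg_smul, sub_neg_eq_add]
  rw [Finset.sum_congr rfl (fun j _ => hterm j), Finset.sum_range_sub' g]
  rw [hg]
  simp only [pow_zero, Nat.factorial_zero, Nat.cast_one, div_one, one_smul, one_mul,
    Module.End.one_apply, hm, mul_zero, smul_zero, sub_zero]

theorem der_J_ne
    (hleib : ∀ (s : Fin k) (x y : B), der s (x * y) = der s x * y + x * der s y)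
    (hcomm : ∀ (s t : Fin k) (x : B), der s (der t x) = der t (der s x))
    (hval : ∀ (s : Fin k) (j : Fin n),
      der s (Bgen j) = if (s : ℕ) = (j : ℕ) then 1 else 0)
    {t s : Fin k} (hts : t ≠ s) (b : B) :
    der t (JL hk Bgen der hnil s b) = JL hk Bgen der hnil s (der t b) := by
  obtain ⟨m, hm⟩ := hnil s b
  have hm' : (der s ^ m) (der t b) = 0 := by
    rw [← der_pow_comm der hcomm, hm, map_zero]
  show der t (Jfun hk Bgen der s b) = Jfun hk Bgen der s (der t b)
  rw [Jfun_eq hk Bgen der s b hm, Jfun_eq hk Bgen der s _ hm', Jsum, Jsum, map_sum]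
  apply Finset.sum_congr rfl
  intro j _
  rw [map_smul, hleib, der_xel_pow_ne hk Bgen der hleib hval hts, zero_mul, zero_add,
    der_pow_comm der hcomm]

/-- the projection-complement operator N. -/
noncomputable def NL (s : Fin k) : B →ₗ[ℂ] B :=
  LinearMap.id - (JL hk Bgen der hnil s).comp (der s)

theorem der_N_self
    (hleib : ∀ (s : Fin k) (x y : B), der s (x * y) = der s x * y + x * der s y)
    (hval : ∀ (s : Fin k) (j : Fin n),
      der s (Bgen j) = if (s : ℕ) = (j : ℕ) then 1 else 0)
    (s : Fin k) (b : B) : der s (NL hk Bgen der hnil s b) = 0 := by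
  rw [NL, LinearMap.sub_apply, LinearMap.id_apply, LinearMap.comp_apply, map_sub,
    der_J_self hk Bgen der hnil hleib hval, sub_self]

theorem der_N_ne
    (hleib : ∀ (s : Fin k) (x y : B), der s (x * y) = der s x * y + x * der s y)
    (hcomm : ∀ (s t : Fin k) (x : B), der s (der t x) = der t (der s x))
    (hval : ∀ (s : Fin k) (j : Fin n),
      der s (Bgen j) = if (s : ℕ) = (j : ℕ) then 1 else 0)
    {t s : Fin k} (hts : t ≠ s) (b : B) :
    der t (NL hk Bgen der hnil s b) = NL hk Bgen der hnil s (der t b) := by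
  simp only [NL, LinearMap.sub_apply, LinearMap.id_apply, LinearMap.comp_apply, map_sub]
  rw [der_J_ne hk Bgen der hnil hleib hcomm hval hts, hcomm]

theorem N_fix (s : Fin k) (b : B) (hb : der s b = 0) :
    NL hk Bgen der hnil s b = b := by
  rw [NL, LinearMap.sub_apply, LinearMap.id_apply, LinearMap.comp_apply, hb, map_zero,
    sub_zero]

/-- iterated projection operators -/
noncomputable def Pmap : ℕ → (B →ₗ[ℂ] B)
  | 0 => LinearMap.id
  | (m + 1) => (Pmap m).comp
      (if h : m < k then NL hk Bgen der hnil ⟨m, h⟩ else LinearMap.id)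

theorem der_P_comm
    (hleib : ∀ (s : Fin k) (x y : B), der s (x * y) = der s x * y + x * der s y)
    (hcomm : ∀ (s t : Fin k) (x : B), der s (der t x) = der t (der s x))
    (hval : ∀ (s : Fin k) (j : Fin n),
      der s (Bgen j) = if (s : ℕ) = (j : ℕ) then 1 else 0)
    (s : Fin k) {m : ℕ} (hm : m ≤ (s : ℕ)) (b : B) :
    der s (Pmap hk Bgen der hnil m b) = Pmap hk Bgen der hnil m (der s b) := by
  induction m generalizing b with
  | zero => rfl
  | succ m ih =>
    have hmk : m < k := Nat.lt_of_lt_of_le (Nat.lt_of_lt_of_le (Nat.lt_of_succ_le hm) (Nat.le_of_lt s.2)) le_rfl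
    have hne : s ≠ (⟨m, hmk⟩ : Fin k) := by
      intro h
      have := congrArg Fin.val h
      simp only at this
      omega
    rw [Pmap, LinearMap.comp_apply, dif_pos hmk,
      ih (le_of_lt (Nat.lt_of_succ_le hm)),
      der_N_ne hk Bgen der hnil hleib hcomm hval hne, LinearMap.comp_apply]

theorem der_P_zero
    (hleib : ∀ (s : Fin k) (x y : B), der s (x * y) = der s x * y + x * der s y)
    (hcomm : ∀ (s t : Fin k) (x : B), der s (der t x) = der t (der s x))
    (hval : ∀ (s : Fin k) (j : Fin n),
      der s (Bgen j) = if (s : ℕ) = (j : ℕ) then 1 else 0)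
    (s : Fin k) {m : ℕ} (hm : (s : ℕ) < m) (b : B) :
    der s (Pmap hk Bgen der hnil m b) = 0 := by
  induction m generalizing b with
  | zero => omega
  | succ m ih =>
    rcases Nat.lt_or_ge (s : ℕ) m with h | h
    · rw [Pmap, LinearMap.comp_apply, ih h]
    · have hsm : (s : ℕ) = m := by omega
      have hmk : m < k := hsm ▸ s.2
      have hs : (⟨m, hmk⟩ : Fin k) = s := by
        apply Fin.ext
        simp [hsm]
      rw [Pmap, LinearMap.comp_apply, dif_pos hmk, hs,
        der_P_comm hk Bgen der hnil hleib hcomm hval s (le_of_eq hsm.symm),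
        der_N_self hk Bgen der hnil hleib hval, map_zero]

theorem P_fix (m : ℕ) (b : B) (hb : ∀ u : Fin k, der u b = 0) :
    Pmap hk Bgen der hnil m b = b := by
  induction m with
  | zero => rfl
  | succ m ih =>
    rw [Pmap, LinearMap.comp_apply]
    split
    · rw [N_fix hk Bgen der hnil _ b (hb _), ih]
    · rw [LinearMap.id_apply, ih]

end Bside

section Eside

variable {k : ℕ}

/-- abbreviation for the exterior algebra on `ℂᵏ` -/
abbrev EA (k : ℕ) : Type := ExteriorAlgebra ℂ (Fin k → ℂ)

/-- standard basis vectors -/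
def eb (s : Fin k) : Fin k → ℂ := Pi.single s 1

/-- left multiplication by `ι v` -/
noncomputable def Lmul (v : Fin k → ℂ) : EA k →ₗ[ℂ] EA k :=
  LinearMap.mulLeft ℂ (ExteriorAlgebra.ι ℂ v)

/-- contraction with the `t`-th coordinate functional -/
noncomputable def ic (t : Fin k) : EA k →ₗ[ℂ] EA k :=
  CliffordAlgebra.contractLeft (LinearMap.proj t)

theorem Lmul_apply (v : Fin k → ℂ) (y : EA k) :
    Lmul v y = ExteriorAlgebra.ι ℂ v * y := rfl

theorem ic_ι_mul (t : Fin k) (v : Fin k → ℂ) (y : EA k) :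
    ic t (ExteriorAlgebra.ι ℂ v * y) = v t • y - ExteriorAlgebra.ι ℂ v * ic t y := by
  apply CliffordAlgebra.contractLeft_ι_mul

theorem ic_one (t : Fin k) : ic t (1 : EA k) = 0 := by
  apply CliffordAlgebra.contractLeft_one

/-- truncation of a vector: zero out the coordinates `< m` -/
def trunc (m : ℕ) (v : Fin k → ℂ) : Fin k → ℂ :=
  fun t => if (t : ℕ) < m then 0 else v t

theorem trunc_zero' (v : Fin k → ℂ) : trunc 0 v = v := by
  funext t; simp [trunc]

theorem trunc_k (v : Fin k → ℂ) : trunc k v = 0 := by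
  funext t; simp [trunc, t.2]

/-- the iterated operators `Q` -/
noncomputable def Qmap : ℕ → (EA k →ₗ[ℂ] EA k)
  | 0 => LinearMap.id
  | (m + 1) =>
      (if h : m < k then (ic ⟨m, h⟩).comp (Lmul (eb ⟨m, h⟩)) else LinearMap.id).comp
        (Qmap m)

theorem Q_one (m : ℕ) : Qmap m (1 : EA k) = 1 := by
  induction m with
  | zero => rfl
  | succ m ih =>
    rw [Qmap, LinearMap.comp_apply, ih]
    split
    · rw [LinearMap.comp_apply, Lmul_apply, mul_one, ← mul_one (ExteriorAlgebra.ι ℂ _),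
        ic_ι_mul, ic_one, mul_zero, sub_zero, eb, Pi.single_eq_same, one_smul]
    · rfl

theorem wedge_calc {k : ℕ} (c : ℂ) (u e z p : EA k)
    (hsw : e * u = -(u * e)) (hsq : e * e = 0) :
    u * z - e * (c • z - u * p) = (u - c • e) * (z - e * p) := by
  have h3 : e * (u * p) = -(u * (e * p)) := by rw [← mul_assoc, hsw, neg_mul, mul_assoc]
  have h4 : e * (e * p) = 0 := by rw [← mul_assoc, hsq, zero_mul]
  rw [mul_sub, mul_smul_comm, sub_mul, smul_mul_assoc, mul_sub, mul_sub, h3, h4,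
    smul_sub, smul_zero]
  abel

theorem ι_swap {k : ℕ} (v w : Fin k → ℂ) :
    ExteriorAlgebra.ι ℂ v * ExteriorAlgebra.ι ℂ w =
      -(ExteriorAlgebra.ι ℂ w * ExteriorAlgebra.ι ℂ v) := by
  rw [eq_neg_iff_add_eq_zero]
  exact ExteriorAlgebra.ι_add_mul_swap v w

theorem trunc_succ {k : ℕ} (m : ℕ) (h : m < k) (v : Fin k → ℂ) :
    trunc (m + 1) v = trunc m v - (trunc m v ⟨m, h⟩) • eb ⟨m, h⟩ := by
  funext t
  simp only [trunc, Pi.sub_apply, Pi.smul_apply, smul_eq_mul, eb]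
  by_cases ht : t = (⟨m, h⟩ : Fin k)
  · subst ht
    simp only [Pi.single_eq_same, mul_one, if_neg (lt_irrefl m), if_pos (Nat.lt_succ_self m)]
    ring
  · rw [Pi.single_eq_of_ne ht, mul_zero, sub_zero]
    have htm : (t : ℕ) ≠ m := fun hc => ht (Fin.ext hc)
    by_cases h2 : (t : ℕ) < m
    · rw [if_pos h2, if_pos (by omega)]
    · rw [if_neg h2, if_neg (by omega)]

theorem trunc_succ_big {k : ℕ} (m : ℕ) (h : ¬ m < k) (v : Fin k → ℂ) :
    trunc (m + 1) v = trunc m v := by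
  funext t
  have htk : (t : ℕ) < k := t.2
  simp only [trunc]
  rw [if_pos (by omega), if_pos (by omega)]

theorem Q_ι_mul (m : ℕ) (v : Fin k → ℂ) (y : EA k) :
    Qmap m (ExteriorAlgebra.ι ℂ v * y) =
      ExteriorAlgebra.ι ℂ (trunc m v) * Qmap m y := by
  induction m generalizing y with
  | zero => rw [trunc_zero']; rfl
  | succ m ih =>
    rw [Qmap, LinearMap.comp_apply, LinearMap.comp_apply, ih]
    by_cases h : m < k
    · rw [dif_pos h, trunc_succ m h v]
      rw [LinearMap.comp_apply, LinearMap.comp_apply, Lmul_apply, Lmul_apply,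
        ic_ι_mul, ic_ι_mul, ic_ι_mul, map_sub, map_smul]
      simp only [eb, Pi.single_eq_same, one_smul]
      exact wedge_calc _ _ _ _ _ (ι_swap _ _)
        (by rw [ι_swap]; rw [ExteriorAlgebra.ι_sq_zero, neg_zero])
    · rw [dif_neg h, trunc_succ_big m h v]; rfl

theorem Lmem (v : Fin k → ℂ) {i : ℕ} {y : EA k} (hy : y ∈ ⋀[ℂ]^i (Fin k → ℂ)) :
    ExteriorAlgebra.ι ℂ v * y ∈ ⋀[ℂ]^(i + 1) (Fin k → ℂ) := by
  have h : (⋀[ℂ]^(i + 1) (Fin k → ℂ)) =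
      LinearMap.range (ExteriorAlgebra.ι ℂ :
        (Fin k → ℂ) →ₗ[ℂ] ExteriorAlgebra ℂ (Fin k → ℂ)) * ⋀[ℂ]^i (Fin k → ℂ) :=
    pow_succ' _ _
  rw [h]
  exact Submodule.mul_mem_mul (LinearMap.mem_range_self _ v) hy

theorem one_mem_ext : (1 : EA k) ∈ ⋀[ℂ]^0 (Fin k → ℂ) := by
  have h0 : (⋀[ℂ]^0 (Fin k → ℂ)) = (1 : Submodule ℂ (EA k)) := pow_zero _
  rw [h0]
  exact Submodule.one_le.mp le_rfl

theorem ic_mem (t : Fin k) {i : ℕ} {y : EA k} (hy : y ∈ ⋀[ℂ]^(i + 1) (Fin k → ℂ)) :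
    ic t y ∈ ⋀[ℂ]^i (Fin k → ℂ) := by
  induction i generalizing y with
  | zero =>
    have h1 : (⋀[ℂ]^1 (Fin k → ℂ)) = LinearMap.range (ExteriorAlgebra.ι ℂ :
        (Fin k → ℂ) →ₗ[ℂ] ExteriorAlgebra ℂ (Fin k → ℂ)) := pow_one _
    rw [show (0 + 1) = 1 from rfl, h1] at hy
    obtain ⟨v, rfl⟩ := hy
    rw [← mul_one (ExteriorAlgebra.ι ℂ v), ic_ι_mul, ic_one, mul_zero, sub_zero]
    exact Submodule.smul_mem _ _ one_mem_ext
  | succ i ih =>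
    have h : (⋀[ℂ]^(i + 1 + 1) (Fin k → ℂ)) =
        LinearMap.range (ExteriorAlgebra.ι ℂ :
          (Fin k → ℂ) →ₗ[ℂ] ExteriorAlgebra ℂ (Fin k → ℂ)) * ⋀[ℂ]^(i + 1) (Fin k → ℂ) :=
      pow_succ' _ _
    rw [h] at hy
    refine Submodule.mul_induction_on hy ?_ ?_
    · rintro a ⟨v, rfl⟩ z hz
      rw [ic_ι_mul]
      exact Submodule.sub_mem _ (Submodule.smul_mem _ _ hz) (Lmem v (ih hz))
    · intro a b hha hhb
      rw [map_add]
      exact Submodule.add_mem _ hha hhb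

theorem Q_mem (m : ℕ) {i : ℕ} {y : EA k} (hy : y ∈ ⋀[ℂ]^i (Fin k → ℂ)) :
    Qmap m y ∈ ⋀[ℂ]^i (Fin k → ℂ) := by
  induction m generalizing y with
  | zero => exact hy
  | succ m ih =>
    rw [Qmap, LinearMap.comp_apply]
    split
    · rw [LinearMap.comp_apply, Lmul_apply]
      exact ic_mem _ (Lmem _ (ih hy))
    · exact ih hy

theorem Q_kill (i : ℕ) {y : EA k} (hy : y ∈ ⋀[ℂ]^(i + 1) (Fin k → ℂ)) :
    Qmap k y = 0 := by
  have h : (⋀[ℂ]^(i + 1) (Fin k → ℂ)) =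
      LinearMap.range (ExteriorAlgebra.ι ℂ :
        (Fin k → ℂ) →ₗ[ℂ] ExteriorAlgebra ℂ (Fin k → ℂ)) * ⋀[ℂ]^i (Fin k → ℂ) :=
    pow_succ' _ _
  rw [h] at hy
  refine Submodule.mul_induction_on hy ?_ ?_
  · rintro a ⟨v, rfl⟩ z hz
    rw [Q_ι_mul, trunc_k, map_zero, zero_mul]
  · intro a b hha hhb
    rw [map_add, hha, hhb, add_zero]

theorem trunc_eb_ge {k : ℕ} {m : ℕ} {s : Fin k} (h : m ≤ (s : ℕ)) :
    trunc m (eb s) = eb s := by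
  funext t
  simp only [trunc]
  split
  · rename_i h1
    rw [eb, Pi.single_eq_of_ne]
    intro hc
    rw [hc] at h1
    omega
  · rfl

theorem trunc_eb_lt {k : ℕ} {m : ℕ} {s : Fin k} (h : (s : ℕ) < m) :
    trunc m (eb s) = 0 := by
  funext t
  simp only [trunc, Pi.zero_apply]
  split
  · rfl
  · rename_i h1
    rw [eb, Pi.single_eq_of_ne]
    intro hc
    rw [hc] at h1
    omega

theorem eb_self {k : ℕ} (s : Fin k) : eb s s = 1 := Pi.single_eq_same _ _

theorem eb_ne {k : ℕ} {s t : Fin k} (h : s ≠ t) : eb s t = 0 := Pi.single_eq_of_ne (Ne.symm h) _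

end Eside

section Tensor

variable {B : Type} [Ring B] [Algebra ℂ B]
variable {n k : ℕ} (hk : k ≤ n) (Bgen : Fin n → B) (der : Fin k → (B →ₗ[ℂ] B))
variable (hnil : ∀ (s : Fin k) (b : B), ∃ m, (der s ^ m) b = 0)

/-- the total differential on `B ⊗ Λ(ℂᵏ)` -/
noncomputable def Dbig : (B ⊗[ℂ] EA k) →ₗ[ℂ] (B ⊗[ℂ] EA k) :=
  ∑ s : Fin k, TensorProduct.map (der s) (Lmul (eb s))

/-- the total homotopy on `B ⊗ Λ(ℂᵏ)` -/
noncomputable def Hbig : (B ⊗[ℂ] EA k) →ₗ[ℂ] (B ⊗[ℂ] EA k) :=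
  ∑ t : Fin k, TensorProduct.map
    ((Pmap hk Bgen der hnil (t : ℕ)).comp (JL hk Bgen der hnil t))
    ((ic t).comp (Qmap (t : ℕ)))

theorem Dbig_tmul (b : B) (y : EA k) :
    Dbig der (b ⊗ₜ[ℂ] y) = ∑ s, (der s b) ⊗ₜ[ℂ] (ExteriorAlgebra.ι ℂ (eb s) * y) := by
  rw [Dbig, LinearMap.sum_apply]
  exact Finset.sum_congr rfl fun s _ => by rw [TensorProduct.map_tmul, Lmul_apply]

theorem Pmap_succ_fin (s : Fin k) :
    Pmap hk Bgen der hnil ((s : ℕ) + 1) =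
      (Pmap hk Bgen der hnil (s : ℕ)).comp (NL hk Bgen der hnil s) := by
  rw [Pmap, dif_pos s.2]

theorem Qmap_succ_fin (s : Fin k) :
    (Qmap ((s : ℕ) + 1) : EA k →ₗ[ℂ] EA k) =
      ((ic s).comp (Lmul (eb s))).comp (Qmap (s : ℕ)) := by
  rw [Qmap, dif_pos s.2]

theorem master
    (hleib : ∀ (s : Fin k) (x y : B), der s (x * y) = der s x * y + x * der s y)
    (hcomm : ∀ (s t : Fin k) (x : B), der s (der t x) = der t (der s x))
    (hval : ∀ (s : Fin k) (j : Fin n),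
      der s (Bgen j) = if (s : ℕ) = (j : ℕ) then 1 else 0) :
    (Dbig der).comp (Hbig hk Bgen der hnil) + (Hbig hk Bgen der hnil).comp (Dbig der) +
      TensorProduct.map (Pmap hk Bgen der hnil k) (Qmap k) = LinearMap.id := by
  apply TensorProduct.ext'
  intro b y
  simp only [LinearMap.add_apply, LinearMap.comp_apply, LinearMap.id_apply,
    TensorProduct.map_tmul]
  set g : ℕ → B ⊗[ℂ] EA k :=
    fun m => (Pmap hk Bgen der hnil m b) ⊗ₜ[ℂ] (Qmap m y) with hg
  set F1 : Fin k → Fin k → B ⊗[ℂ] EA k := fun s t =>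
    (der s ((Pmap hk Bgen der hnil (t : ℕ)) (JL hk Bgen der hnil t b))) ⊗ₜ[ℂ]
      (Lmul (eb s) ((ic t) (Qmap (t : ℕ) y))) with hF1
  set F2 : Fin k → Fin k → B ⊗[ℂ] EA k := fun s t =>
    ((Pmap hk Bgen der hnil (t : ℕ)) (JL hk Bgen der hnil t (der s b))) ⊗ₜ[ℂ]
      ((ic t) (Qmap (t : ℕ) (Lmul (eb s) y))) with hF2
  have e1 : Dbig der (Hbig hk Bgen der hnil (b ⊗ₜ[ℂ] y)) = ∑ s, ∑ t, F1 s t := by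
    rw [Hbig, LinearMap.sum_apply]
    simp only [TensorProduct.map_tmul, LinearMap.comp_apply]
    rw [Dbig, LinearMap.sum_apply]
    apply Finset.sum_congr rfl
    intro s _
    rw [map_sum]
    apply Finset.sum_congr rfl
    intro t _
    rw [TensorProduct.map_tmul]
  have e2 : Hbig hk Bgen der hnil (Dbig der (b ⊗ₜ[ℂ] y)) = ∑ s, ∑ t, F2 s t := by
    rw [Dbig, LinearMap.sum_apply]
    simp only [TensorProduct.map_tmul]
    rw [Hbig, LinearMap.sum_apply]
    rw [Finset.sum_comm]
    apply Finset.sum_congr rfl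
    intro s _
    rw [map_sum]
    apply Finset.sum_congr rfl
    intro t _
    rw [TensorProduct.map_tmul, LinearMap.comp_apply, LinearMap.comp_apply]
  have e3 : ∀ s t : Fin k, t ≠ s → F1 s t + F2 s t = 0 := by
    intro s t hts
    rcases Nat.lt_or_ge (t : ℕ) (s : ℕ) with h | h
    · -- t < s : the two terms cancel
      have hB : der s ((Pmap hk Bgen der hnil (t : ℕ)) (JL hk Bgen der hnil t b)) =
          (Pmap hk Bgen der hnil (t : ℕ)) (JL hk Bgen der hnil t (der s b)) := by
        rw [der_P_comm hk Bgen der hnil hleib hcomm hval s (le_of_lt h),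
          der_J_ne hk Bgen der hnil hleib hcomm hval (Ne.symm hts)]
      have hQ : Qmap (t : ℕ) (Lmul (eb s) y) =
          ExteriorAlgebra.ι ℂ (eb s) * Qmap (t : ℕ) y := by
        rw [Lmul_apply, Q_ι_mul, trunc_eb_ge (le_of_lt h)]
      have hic : (ic t) (Qmap (t : ℕ) (Lmul (eb s) y)) =
          -(Lmul (eb s) ((ic t) (Qmap (t : ℕ) y))) := by
        rw [hQ, ic_ι_mul, eb_ne (Ne.symm hts), zero_smul, zero_sub, Lmul_apply]
      rw [hF1, hF2]
      simp only []
      rw [hB, hic, TensorProduct.tmul_neg, add_neg_cancel]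
    · -- s < t (since t ≠ s)
      have hst : (s : ℕ) < (t : ℕ) := by
        rcases Nat.lt_or_ge (s : ℕ) (t : ℕ) with h' | h'
        · exact h'
        · exfalso; exact hts (Fin.ext (by omega))
      have hB : der s ((Pmap hk Bgen der hnil (t : ℕ)) (JL hk Bgen der hnil t b)) = 0 :=
        der_P_zero hk Bgen der hnil hleib hcomm hval s hst _
      have hQ : Qmap (t : ℕ) (Lmul (eb s) y) = 0 := by
        rw [Lmul_apply, Q_ι_mul, trunc_eb_lt hst, map_zero, zero_mul]
      rw [hF1, hF2]
      simp only []
      rw [hB, hQ, map_zero, TensorProduct.zero_tmul, TensorProduct.tmul_zero, add_zero]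
  have e4 : ∀ s : Fin k, F1 s s + F2 s s = g (s : ℕ) - g ((s : ℕ) + 1) := by
    intro s
    have hB1 : der s ((Pmap hk Bgen der hnil (s : ℕ)) (JL hk Bgen der hnil s b)) =
        Pmap hk Bgen der hnil (s : ℕ) b := by
      rw [der_P_comm hk Bgen der hnil hleib hcomm hval s le_rfl,
        der_J_self hk Bgen der hnil hleib hval]
    have hB2 : (Pmap hk Bgen der hnil (s : ℕ)) (JL hk Bgen der hnil s (der s b)) =
        Pmap hk Bgen der hnil (s : ℕ) b - Pmap hk Bgen der hnil ((s : ℕ) + 1) b := by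
      have hJN : JL hk Bgen der hnil s (der s b) = b - NL hk Bgen der hnil s b := by
        rw [NL, LinearMap.sub_apply, LinearMap.id_apply, LinearMap.comp_apply,
          sub_sub_cancel]
      rw [hJN, map_sub, Pmap_succ_fin hk Bgen der hnil s, LinearMap.comp_apply]
    have hQ2 : (ic s) (Qmap (s : ℕ) (Lmul (eb s) y)) = Qmap ((s : ℕ) + 1) y := by
      rw [Lmul_apply, Q_ι_mul, trunc_eb_ge le_rfl, Qmap_succ_fin,
        LinearMap.comp_apply, LinearMap.comp_apply, Lmul_apply]
    have hQ1 : Lmul (eb s) ((ic s) (Qmap (s : ℕ) y)) =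
        Qmap (s : ℕ) y - Qmap ((s : ℕ) + 1) y := by
      have := ic_ι_mul s (eb s) (Qmap (s : ℕ) y)
      rw [eb_self, one_smul] at this
      rw [Lmul_apply, eq_sub_iff_add_eq, ← hQ2, Lmul_apply, Q_ι_mul,
        trunc_eb_ge le_rfl, this]
      abel
    rw [hF1, hF2]
    simp only []
    rw [hB1, hB2, hQ1, hQ2, hg]
    simp only []
    rw [TensorProduct.tmul_sub, TensorProduct.sub_tmul]
    abel
  rw [e1, e2, ← Finset.sum_add_distrib]
  have e5 : ∀ s : Fin k, (∑ t, F1 s t) + (∑ t, F2 s t) = g (s : ℕ) - g ((s : ℕ) + 1) := by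
    intro s
    rw [← Finset.sum_add_distrib]
    rw [Finset.sum_eq_single_of_mem s (Finset.mem_univ s)
      (fun t _ hts => e3 s t hts)]
    exact e4 s
  rw [Finset.sum_congr rfl (fun s _ => e5 s)]
  have e6 : ∑ s : Fin k, (g (s : ℕ) - g ((s : ℕ) + 1)) =
      ∑ m ∈ Finset.range k, (g m - g (m + 1)) :=
    Fin.sum_univ_eq_sum_range (fun m => g m - g (m + 1)) k
  rw [e6, Finset.sum_range_sub' g]
  have e7 : g 0 = b ⊗ₜ[ℂ] y := rfl
  rw [e7]
  abel

/-- inclusion of the degree-`i` part into the full tensor algebra -/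
noncomputable def incl (i : ℕ) :
    (B ⊗[ℂ] ⋀[ℂ]^i (Fin k → ℂ)) →ₗ[ℂ] (B ⊗[ℂ] EA k) :=
  TensorProduct.map LinearMap.id (Submodule.subtype _)

theorem incl_tmul (i : ℕ) (b : B) (ω : ⋀[ℂ]^i (Fin k → ℂ)) :
    incl (B := B) i (b ⊗ₜ[ℂ] ω) = b ⊗ₜ[ℂ] (ω : EA k) := rfl

theorem incl_inj (i : ℕ) : Function.Injective (incl (B := B) (k := k) i) := by
  obtain ⟨q, hq⟩ := Submodule.exists_isCompl (⋀[ℂ]^i (Fin k → ℂ))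
  set π := Submodule.linearProjOfIsCompl _ q hq with hπ
  have hcomp : (TensorProduct.map (LinearMap.id : B →ₗ[ℂ] B) π).comp (incl i) =
      LinearMap.id := by
    rw [incl, ← TensorProduct.map_comp]
    have h1 : π.comp (Submodule.subtype _) = LinearMap.id :=
      Submodule.linearProjOfIsCompl_comp_subtype hq
    rw [h1, LinearMap.comp_id, TensorProduct.map_id]
  intro x y hxy
  have := congrArg (TensorProduct.map (LinearMap.id : B →ₗ[ℂ] B) π) hxy
  rwa [← LinearMap.comp_apply, ← LinearMap.comp_apply, hcomp, LinearMap.id_apply,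
    LinearMap.id_apply] at this

/-- the degree-wise homotopy -/
noncomputable def hres (i : ℕ) :
    (B ⊗[ℂ] ⋀[ℂ]^(i + 1) (Fin k → ℂ)) →ₗ[ℂ] (B ⊗[ℂ] ⋀[ℂ]^i (Fin k → ℂ)) :=
  ∑ t : Fin k, TensorProduct.map
    ((Pmap hk Bgen der hnil (t : ℕ)).comp (JL hk Bgen der hnil t))
    (((ic t).comp (Qmap (t : ℕ))).restrict
      (fun x hx => ic_mem t (Q_mem (t : ℕ) hx)))

set_option synthInstance.maxHeartbeats 400000 in
theorem compat_h (i : ℕ) :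
    (incl i).comp (hres hk Bgen der hnil i) =
      (Hbig hk Bgen der hnil).comp (incl (i + 1)) := by
  apply TensorProduct.ext'
  intro b ω
  rw [LinearMap.comp_apply, LinearMap.comp_apply, incl_tmul, hres,
    LinearMap.sum_apply, Hbig, LinearMap.sum_apply, map_sum]
  apply Finset.sum_congr rfl
  intro t _
  rw [TensorProduct.map_tmul, TensorProduct.map_tmul, incl_tmul]
  congr 1

theorem DD_zero
    (hcomm : ∀ (s t : Fin k) (x : B), der s (der t x) = der t (der s x)) :
    (Dbig der).comp (Dbig der) = (0 : (B ⊗[ℂ] EA k) →ₗ[ℂ] (B ⊗[ℂ] EA k)) := by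
  apply TensorProduct.ext'
  intro b y
  rw [LinearMap.comp_apply, LinearMap.zero_apply]
  set f : Fin k → Fin k → B ⊗[ℂ] EA k := fun s t =>
    (der s (der t b)) ⊗ₜ[ℂ]
      (ExteriorAlgebra.ι ℂ (eb s) * (ExteriorAlgebra.ι ℂ (eb t) * y)) with hf
  have hD : Dbig der (Dbig der (b ⊗ₜ[ℂ] y)) = ∑ s, ∑ t, f s t := by
    rw [Dbig_tmul, map_sum, Finset.sum_comm]
    apply Finset.sum_congr rfl
    intro t _
    rw [Dbig_tmul]
  have hanti : ∀ s t, f s t = -(f t s) := by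
    intro s t
    simp only [hf]
    rw [hcomm]
    have hι : ExteriorAlgebra.ι ℂ (eb s) * (ExteriorAlgebra.ι ℂ (eb t) * y) =
        -(ExteriorAlgebra.ι ℂ (eb t) * (ExteriorAlgebra.ι ℂ (eb s) * y)) := by
      rw [← mul_assoc, ι_swap, neg_mul, mul_assoc]
    rw [hι, TensorProduct.tmul_neg]
  have hS : (∑ s, ∑ t, f s t) = -(∑ s, ∑ t, f s t) := by
    calc (∑ s, ∑ t, f s t) = ∑ t, ∑ s, f s t := Finset.sum_comm
      _ = ∑ t, ∑ s, -(f t s) := by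
          refine Finset.sum_congr rfl fun t _ => ?_
          exact Finset.sum_congr rfl fun s _ => hanti s t
      _ = -(∑ t, ∑ s, f t s) := by
          rw [← Finset.sum_neg_distrib]
          exact Finset.sum_congr rfl fun t _ => Finset.sum_neg_distrib _
      _ = -(∑ s, ∑ t, f s t) := rfl
  rw [hD]
  have h2 : (2 : ℂ) • (∑ s, ∑ t, f s t) = 0 := by
    rw [two_smul]
    nth_rewrite 2 [hS]
    rw [add_neg_cancel]
  have := congrArg (fun z => ((2 : ℂ)⁻¹) • z) h2
  simpa [smul_smul] using this

theorem Hbig_one (b : B) :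
    Hbig hk Bgen der hnil (b ⊗ₜ[ℂ] (1 : EA k)) = 0 := by
  rw [Hbig, LinearMap.sum_apply]
  apply Finset.sum_eq_zero
  intro t _
  rw [TensorProduct.map_tmul, LinearMap.comp_apply, LinearMap.comp_apply, Q_one, ic_one,
    TensorProduct.tmul_zero]

/-- the unit of `Λ⁰` -/
noncomputable def oneEl : ⋀[ℂ]^0 (Fin k → ℂ) := ⟨1, one_mem_ext⟩

theorem tensor_deg0 (x : B ⊗[ℂ] ⋀[ℂ]^0 (Fin k → ℂ)) :
    ∃ b : B, x = b ⊗ₜ[ℂ] (oneEl (k := k)) := by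
  induction x with
  | zero => exact ⟨0, (TensorProduct.zero_tmul _ _).symm⟩
  | tmul b ω =>
    have hω : (ω : EA k) ∈ (1 : Submodule ℂ (EA k)) := by
      have h0 : (⋀[ℂ]^0 (Fin k → ℂ)) = (1 : Submodule ℂ (EA k)) := pow_zero _
      rw [← h0]
      exact ω.2
    obtain ⟨c, hc⟩ := Submodule.mem_one.mp hω
    have hωeq : ω = c • oneEl := by
      apply Subtype.ext
      rw [← hc, Algebra.algebraMap_eq_smul_one]
      rfl
    exact ⟨c • b, by rw [hωeq, TensorProduct.tmul_smul, TensorProduct.smul_tmul']⟩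
  | add x y ihx ihy =>
    obtain ⟨bx, rfl⟩ := ihx
    obtain ⟨by', rfl⟩ := ihy
    exact ⟨bx + by', (TensorProduct.add_tmul _ _ _).symm⟩

/-- counit extracting the coefficient of `1` -/
noncomputable def psi : (B ⊗[ℂ] EA k) →ₗ[ℂ] B :=
  (TensorProduct.rid ℂ B).toLinearMap.comp
    (LinearMap.lTensor B (ExteriorAlgebra.algebraMapInv (R := ℂ)
      (M := Fin k → ℂ)).toLinearMap)

theorem psi_tmul_one (b : B) : psi (b ⊗ₜ[ℂ] (1 : EA k)) = b := by
  rw [psi, LinearMap.comp_apply, LinearMap.lTensor_tmul]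
  have h1 : (ExteriorAlgebra.algebraMapInv (R := ℂ) (M := Fin k → ℂ)).toLinearMap
      (1 : EA k) = 1 := by
    rw [AlgHom.toLinearMap_apply, map_one]
  rw [h1]
  simp [TensorProduct.rid_tmul]

end Tensor

/-- the Koszul-type complex `B ⊗ Λ•(ℂᵏ)` with differential
`d(b ⊗ ω) = Σ_s ∂ s b ⊗ (e_s ∧ ω)` is a complex whose cohomology is concentrated in
degree `0`, where it equals `G⁰ ⊗ Λ⁰` (so it is isomorphic to `G⁰ = ⋂ ker ∂ s`). -/
theorem statement4
    (B : Type) [Ring B] [Algebra ℂ B]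
    (n k : ℕ) (hk : k ≤ n)
    (Bgen : Fin n → B)
    (hgen : Algebra.adjoin ℂ (Set.range Bgen) = ⊤)
    (der : Fin k → (B →ₗ[ℂ] B))
    (hleib : ∀ (s : Fin k) (x y : B), der s (x * y) = der s x * y + x * der s y)
    (hcomm : ∀ (s t : Fin k) (x : B), der s (der t x) = der t (der s x))
    (hval : ∀ (s : Fin k) (j : Fin n),
      der s (Bgen j) = if (s : ℕ) = (j : ℕ) then 1 else 0)
    (G : ℕ → Submodule ℂ B)
    (hG0 : G 0 = ⨅ s, LinearMap.ker (der s))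
    (hGsucc : ∀ i, G (i + 1) = ⨅ s, (G i).comap (der s))
    (d : ∀ i : ℕ,
      (B ⊗[ℂ] ⋀[ℂ]^i (Fin k → ℂ)) →ₗ[ℂ] (B ⊗[ℂ] ⋀[ℂ]^(i + 1) (Fin k → ℂ)))
    (hd : ∀ (i : ℕ) (b : B) (ω : ⋀[ℂ]^i (Fin k → ℂ)),
      d i (b ⊗ₜ[ℂ] ω) = ∑ s : Fin k, (der s b) ⊗ₜ[ℂ] wedgeCons i (Pi.single s 1) ω) :
    (∀ i : ℕ, (d (i + 1)).comp (d i) = 0) ∧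
    (LinearMap.ker (d 0) =
      LinearMap.range
        (TensorProduct.map (G 0).subtype
          (LinearMap.id : ⋀[ℂ]^0 (Fin k → ℂ) →ₗ[ℂ] ⋀[ℂ]^0 (Fin k → ℂ)))) ∧
    (∀ i : ℕ, LinearMap.ker (d (i + 1)) = LinearMap.range (d i)) := by
  
  classical
  have hnil : ∀ (s : Fin k) (b : B), ∃ m, (der s ^ m) b = 0 :=
    der_nil Bgen der hgen hleib hval
  have hcompat : ∀ (i : ℕ) (z : B ⊗[ℂ] ⋀[ℂ]^i (Fin k → ℂ)),
      incl (i + 1) (d i z) = Dbig der (incl i z) := by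
    have hc : ∀ i : ℕ, (incl (i + 1)).comp (d i) = (Dbig der).comp (incl i) := by
      intro i
      apply TensorProduct.ext'
      intro b ω
      rw [LinearMap.comp_apply, LinearMap.comp_apply, incl_tmul, hd, map_sum,
        Dbig_tmul]
      exact Finset.sum_congr rfl fun s _ => rfl
    exact fun i z => LinearMap.congr_fun (hc i) z
  have part1 : ∀ i : ℕ, (d (i + 1)).comp (d i) = 0 := by
    intro i
    apply LinearMap.ext
    intro x
    rw [LinearMap.comp_apply, LinearMap.zero_apply]
    apply incl_inj (i + 1 + 1)
    rw [hcompat (i + 1), hcompat i, ← LinearMap.comp_apply, DD_zero der hcomm, LinearMap.zero_apply,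
      map_zero]
  refine ⟨part1, ?_, ?_⟩
  · -- degree 0
    apply le_antisymm
    · intro x hx
      rw [LinearMap.mem_ker] at hx
      obtain ⟨b, rfl⟩ := tensor_deg0 x
      have hincl0 : incl 0 (b ⊗ₜ[ℂ] oneEl) = b ⊗ₜ[ℂ] (1 : EA k) := rfl
      have hDx : Dbig der (b ⊗ₜ[ℂ] (1 : EA k)) = 0 := by
        rw [← hincl0, ← hcompat 0 (b ⊗ₜ[ℂ] oneEl), hx, map_zero]
      have hmaster := LinearMap.congr_fun
        (master hk Bgen der hnil hleib hcomm hval) (b ⊗ₜ[ℂ] (1 : EA k))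
      simp only [LinearMap.add_apply, LinearMap.comp_apply, LinearMap.id_apply] at hmaster
      rw [Hbig_one hk Bgen der hnil b, map_zero, hDx, map_zero, zero_add, zero_add,
        TensorProduct.map_tmul, Q_one] at hmaster
      have hPb : Pmap hk Bgen der hnil k b = b := by
        have := congrArg (psi (B := B) (k := k)) hmaster
        rwa [psi_tmul_one, psi_tmul_one] at this
      have hbG : b ∈ G 0 := by
        rw [hG0, Submodule.mem_iInf]
        intro s
        rw [LinearMap.mem_ker, ← hPb]
        exact der_P_zero hk Bgen der hnil hleib hcomm hval s s.2 b
      exact ⟨(⟨b, hbG⟩ : G 0) ⊗ₜ[ℂ] oneEl, rfl⟩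
    · rintro x ⟨z, rfl⟩
      rw [LinearMap.mem_ker]
      have hz : (d 0).comp (TensorProduct.map (G 0).subtype
          (LinearMap.id : ⋀[ℂ]^0 (Fin k → ℂ) →ₗ[ℂ] ⋀[ℂ]^0 (Fin k → ℂ))) = 0 := by
        apply TensorProduct.ext'
        intro g ω
        rw [LinearMap.comp_apply, TensorProduct.map_tmul, LinearMap.zero_apply]
        have hg : ∀ s : Fin k, der s ((G 0).subtype g) = 0 := by
          intro s
          have hm : (g : B) ∈ (⨅ u, LinearMap.ker (der u) : Submodule ℂ B) := by
            rw [← hG0]; exact g.2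
          rw [Submodule.mem_iInf] at hm
          exact hm s
        rw [hd]
        apply Finset.sum_eq_zero
        intro s _
        rw [hg s, TensorProduct.zero_tmul]
      exact LinearMap.congr_fun hz z
  · -- degrees ≥ 1
    intro i
    apply le_antisymm
    · intro x hx
      rw [LinearMap.mem_ker] at hx
      have hDx : Dbig der (incl (i + 1) x) = 0 := by
        rw [← hcompat (i + 1) x, hx, map_zero]
      have hPQ : TensorProduct.map (Pmap hk Bgen der hnil k)
          (Qmap k : EA k →ₗ[ℂ] EA k) (incl (i + 1) x) = 0 := by
        have hcomp0 : (TensorProduct.map (Pmap hk Bgen der hnil k)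
            (Qmap k : EA k →ₗ[ℂ] EA k)).comp (incl (i + 1)) = 0 := by
          apply TensorProduct.ext'
          intro b ω
          rw [LinearMap.comp_apply, incl_tmul, TensorProduct.map_tmul,
            Q_kill i ω.2, TensorProduct.tmul_zero, LinearMap.zero_apply]
        exact LinearMap.congr_fun hcomp0 x
      have hmaster := LinearMap.congr_fun
        (master hk Bgen der hnil hleib hcomm hval) (incl (i + 1) x)
      simp only [LinearMap.add_apply, LinearMap.comp_apply, LinearMap.id_apply] at hmaster
      have hH : Hbig hk Bgen der hnil (incl (i + 1) x) =
          incl i (hres hk Bgen der hnil i x) :=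
        (LinearMap.congr_fun (compat_h hk Bgen der hnil i) x).symm
      rw [hDx, map_zero, hPQ, add_zero, add_zero, hH] at hmaster
      refine ⟨hres hk Bgen der hnil i x, ?_⟩
      apply incl_inj (i + 1)
      rw [hcompat i (hres hk Bgen der hnil i x)]
      exact hmaster
    · rintro x ⟨z, rfl⟩
      rw [LinearMap.mem_ker]
      exact LinearMap.congr_fun (part1 i) z
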